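/- Let G be a graph of order n ≥ 2 with fixing number k ≥ 1. Then the number of edges of the fixing graph F(G) satisfies |E(F(G))| ≤ n(C(n,2) − k + 1), where C(n,2) = n(n−1)/2. Moreover, every vertex x ∈ S(G) has degree at most |V_s(G)| − k + 1 in F(G). -/

import Mathlib

open scoped Classical

def fixesPair {V : Type*} (G : SimpleGraph V) (x u v : V) : Prop :=
  ∀ g : G ≃g G, g x = x → g u ≠ v ∧ g v ≠ u

/-- `D` is a fixing (determining) set: the only automorphism fixing `D` pointwise is the identity. -/
def isFixingSet {V : Type*} (G : SimpleGraph V) (D : Set V) : Prop :=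
  ∀ g : G ≃g G, (∀ v ∈ D, g v = v) → ∀ v : V, g v = v

/-- `S(G)`: vertices moved by some automorphism. -/
noncomputable def SG {n : ℕ} (G : SimpleGraph (Fin n)) : Finset (Fin n) :=
  Finset.univ.filter (fun v => ∃ g : G ≃g G, g v ≠ v)

/-- `V_s(G)`: (unordered, encoded as increasing ordered) pairs of distinct similar vertices. -/
noncomputable def VsG {n : ℕ} (G : SimpleGraph (Fin n)) : Finset (Fin n × Fin n) :=
  Finset.univ.filter (fun p => p.1 < p.2 ∧ ∃ g : G ≃g G, g p.1 = p.2)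

/-- Degree of `x ∈ S(G)` in the fixing graph `F(G)`. -/
noncomputable def degF {n : ℕ} (G : SimpleGraph (Fin n)) (x : Fin n) : ℕ :=
  ((VsG G).filter (fun p => fixesPair G x p.1 p.2)).card

/-- Number of edges of the fixing graph `F(G)`. -/
noncomputable def edgesF {n : ℕ} (G : SimpleGraph (Fin n)) : ℕ :=
  ∑ x ∈ SG G, degF G x

/-- key counting lemma: for any vertex `x`, at least `k-1` pairs of `V_s(G)` are NOT fixed by `x`. -/
lemma key_lemma {n : ℕ} (G : SimpleGraph (Fin n)) (k : ℕ)
    (hfix : IsLeast {m | ∃ D : Finset (Fin n), isFixingSet G ↑D ∧ D.card = m} k)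
    (x : Fin n) :
    k ≤ 1 + ((VsG G).filter (fun p => ¬ fixesPair G x p.1 p.2)).card := by
  set U := (VsG G).filter (fun p => ¬ fixesPair G x p.1 p.2) with hU
  set D : Finset (Fin n) := insert x (U.image Prod.fst) with hD
  have hDfix : isFixingSet G ↑D := by
    intro g hg
    by_contra h
    push_neg at h
    obtain ⟨v0, hv0⟩ := h
    have hne : (Finset.univ.filter (fun v => g v ≠ v)).Nonempty :=
      ⟨v0, by simp [hv0]⟩
    set w := (Finset.univ.filter (fun v => g v ≠ v)).min' hne with hw
    have hwmoved : g w ≠ w := by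
      have := Finset.min'_mem _ hne
      rw [← hw] at this
      simpa using this
    have hgx : g x = x := hg x (by simp [hD])
    have hgw_moved : g (g w) ≠ g w := fun h' => hwmoved (g.injective h')
    have hle : w ≤ g w := Finset.min'_le _ _ (by simp [hgw_moved])
    have hlt : w < g w := lt_of_le_of_ne hle (Ne.symm hwmoved)
    have hpU : (w, g w) ∈ U := by
      rw [hU, Finset.mem_filter]
      refine ⟨?_, ?_⟩
      · rw [VsG, Finset.mem_filter]
        exact ⟨Finset.mem_univ _, hlt, ⟨g, rfl⟩⟩
      · intro hfp
        exact (hfp g hgx).1 rfl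
    have hwD : w ∈ D := by
      rw [hD]
      exact Finset.mem_insert_of_mem (Finset.mem_image_of_mem Prod.fst hpU)
    exact hwmoved (hg w (by simpa using hwD))
  have hkD : k ≤ D.card := hfix.2 ⟨D, hDfix, rfl⟩
  calc k ≤ D.card := hkD
    _ ≤ (U.image Prod.fst).card + 1 := Finset.card_insert_le _ _
    _ ≤ U.card + 1 := by
        have := Finset.card_image_le (s := U) (f := Prod.fst)
        omega
    _ = 1 + U.card := by omega

lemma vs_card_le {n : ℕ} (G : SimpleGraph (Fin n)) : (VsG G).card ≤ n.choose 2 := by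
  have h : (VsG G).card ≤ ((Finset.univ : Finset (Fin n)).powersetCard 2).card := by
    apply Finset.card_le_card_of_injOn (fun p => {p.1, p.2})
    · intro p hp
      rw [Finset.mem_coe, Finset.mem_powersetCard]
      refine ⟨Finset.subset_univ _, ?_⟩
      have hne : p.1 ≠ p.2 := by
        rw [Finset.mem_coe, VsG, Finset.mem_filter] at hp; exact ne_of_lt hp.2.1
      rw [Finset.card_insert_of_notMem (by simp [hne]), Finset.card_singleton]
    · intro p hp q hq hpq
      rw [Finset.mem_coe, VsG, Finset.mem_filter] at hp hq
      have h1 : (p.1 : ℕ) < p.2 := hp.2.1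
      have h2 : (q.1 : ℕ) < q.2 := hq.2.1
      have hpq' : ({p.1, p.2} : Finset (Fin n)) = {q.1, q.2} := hpq
      have hmem : p.1 ∈ ({q.1, q.2} : Finset (Fin n)) := by rw [← hpq']; simp
      have hmem2 : p.2 ∈ ({q.1, q.2} : Finset (Fin n)) := by rw [← hpq']; simp
      simp only [Finset.mem_insert, Finset.mem_singleton] at hmem hmem2
      have e1 : (p.1 : ℕ) = q.1 ∨ (p.1 : ℕ) = q.2 := by
        rcases hmem with h | h <;> simp [h]
      have e2 : (p.2 : ℕ) = q.1 ∨ (p.2 : ℕ) = q.2 := by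
        rcases hmem2 with h | h <;> simp [h]
      have : (p.1 : ℕ) = q.1 ∧ (p.2 : ℕ) = q.2 := by omega
      exact Prod.ext (Fin.ext this.1) (Fin.ext this.2)
  simpa [Finset.card_powersetCard, Fintype.card_fin] using h

/-- If `G` has order `n ≥ 2` and fixing number `k ≥ 1`, then `|E(F(G))| ≤ n(C(n,2)-k+1)` and
every `x ∈ S(G)` has degree at most `|V_s(G)| - k + 1` in `F(G)`. -/
theorem stmt11 {n : ℕ} (hn : 2 ≤ n) (G : SimpleGraph (Fin n)) (k : ℕ) (hk : 1 ≤ k)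
    (hfix : IsLeast {m | ∃ D : Finset (Fin n), isFixingSet G ↑D ∧ D.card = m} k) :
    edgesF G ≤ n * (n.choose 2 - k + 1) ∧
      ∀ x ∈ SG G, degF G x ≤ (VsG G).card - k + 1 := by
  have hdeg : ∀ x : Fin n, degF G x ≤ (VsG G).card - k + 1 := by
    intro x
    have hkey := key_lemma G k hfix x
    have hsplit :
        ((VsG G).filter (fun p => fixesPair G x p.1 p.2)).card +
          ((VsG G).filter (fun p => ¬ fixesPair G x p.1 p.2)).card = (VsG G).card :=
      Finset.card_filter_add_card_filter_not _
    rw [degF]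
    omega
  refine ⟨?_, fun x _ => hdeg x⟩
  have hsum : edgesF G ≤ (SG G).card * ((VsG G).card - k + 1) := by
    rw [edgesF]
    calc ∑ x ∈ SG G, degF G x ≤ ∑ _x ∈ SG G, ((VsG G).card - k + 1) :=
          Finset.sum_le_sum (fun x _ => hdeg x)
      _ = (SG G).card * ((VsG G).card - k + 1) := by
          rw [Finset.sum_const, smul_eq_mul]
  refine hsum.trans ?_
  have h1 : (SG G).card ≤ n := by
    simpa [Fintype.card_fin] using Finset.card_le_univ (SG G)
  have h2 : (VsG G).card - k + 1 ≤ n.choose 2 - k + 1 := by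
    have := vs_card_le G
    omega
  exact Nat.mul_le_mul h1 h2
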